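/- Let H : [0,1]×ℝ → ℝ be continuous, convex and superlinear in the second variable, with Lagrangian L, and let U be a continuous real-valued function on the closure of Q. Suppose that for every (s,t) ∈ Q and every C¹ curve η taking values in [0,1] with η(t) = s, one has U(s,t) − U(η(t−δ), t−δ) ≤ ∫_{t−δ}^t L(η(τ),η̇(τ)) dτ for all sufficiently small δ > 0. Then U is a viscosity subsolution of U_t + H(s,U') = 0 in Q. -/

import Mathlib

open Set MeasureTheory Filter Topology
open scoped Classical

noncomputable section

/-! #### Absolutely continuous curves and extended-real integrals -/

/-- `ξ` is absolutely continuous on `[a,b]`, with `ξ'` as a choice of its a.e. derivative: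
`ξ'` is integrable on `[a,b]` and the fundamental theorem of calculus holds. -/
def IsACDerivOn {E : Type*} [NormedAddCommGroup E] [NormedSpace ℝ E]
    (a b : ℝ) (ξ ξ' : ℝ → E) : Prop :=
  IntegrableOn ξ' (Icc a b) ∧ ∀ t ∈ Icc a b, ξ t = ξ a + ∫ τ in a..t, ξ' τ

/-- Extended-real integral on `[a,b]`, suited to integrands which are bounded from below:
it is the Bochner integral when the integrand is a.e. finite and integrable, `+∞` otherwise. -/
def eIntegral (a b : ℝ) (f : ℝ → EReal) : EReal :=
  if IntegrableOn (fun τ => (f τ).toReal) (Icc a b) ∧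
      (∀ᵐ τ ∂(volume.restrict (Icc a b)), f τ ≠ ⊤ ∧ f τ ≠ ⊥) then
    (((∫ τ in Icc a b, (f τ).toReal) : ℝ) : EReal)
  else ⊤

/-! #### One-dimensional Hamiltonians on `[0,1] × ℝ` -/

/-- Standing assumptions on a Hamiltonian `H : [0,1] × ℝ → ℝ`: continuity, convexity in the
momentum variable, and superlinearity in the momentum variable, uniformly in the state. -/
structure IsHamiltonian (H : ℝ → ℝ → ℝ) : Prop where
  cont : ContinuousOn (fun p : ℝ × ℝ => H p.1 p.2) (Icc 0 1 ×ˢ univ)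
  convex : ∀ s ∈ Icc (0:ℝ) 1, ConvexOn ℝ univ fun μ => H s μ
  superlinear : ∀ A : ℝ, ∃ R : ℝ, ∀ s ∈ Icc (0:ℝ) 1, ∀ μ : ℝ, R ≤ |μ| → A * |μ| ≤ H s μ

/-- The Lagrangian associated to `H` via the Fenchel transform:
`L(s,λ) = sup_μ (λ μ - H(s,μ))`. -/
def Lagr (H : ℝ → ℝ → ℝ) (s lam : ℝ) : ℝ :=
  sSup (range fun μ => lam * μ - H s μ)

/-- `c_H = - max_{s ∈ [0,1]} min_{μ ∈ ℝ} H(s,μ)`. -/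
def cHam (H : ℝ → ℝ → ℝ) : ℝ :=
  - sSup ((fun s => sInf (range fun μ => H s μ)) '' Icc 0 1)

/-- The modified Lagrangian `L̄`, equal to `L` for `s ∉ {0,1}` and to
`L(s,λ) + c - L(s,0)` for `s ∈ {0,1}`. -/
def Lbar (H : ℝ → ℝ → ℝ) (c : ℝ) (s lam : ℝ) : ℝ :=
  if s = 0 ∨ s = 1 then Lagr H s lam + c - Lagr H s 0 else Lagr H s lam

/-- The extension `F` of `L̄` to `ℝ × ℝ` obtained by successive reflections:
`F(s,λ) = L̄(s-n,λ)` on `(n,n+1]` for even `n ∈ ℕ`, `F(s,λ) = L̄(1-s+n,λ)` on `(n,n+1]`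
for odd `n ∈ ℕ`, `F(s,λ) = L̄(-s-n,λ)` on `(-n-1,-n]` for even `n ∈ ℕ` and
`F(s,λ) = L̄(s+n+1,λ)` on `(-n-1,-n]` for odd `n ∈ ℕ`; equivalently,
`F(s,λ) = L̄(dist(s, 2ℤ), λ)`. -/
def Fext (H : ℝ → ℝ → ℝ) (c : ℝ) (s lam : ℝ) : ℝ :=
  Lbar H c |s - 2 * (round (s / 2) : ℝ)| lam

/-! #### Viscosity solutions on `Q = (0,1) × (0,+∞)` -/

/-- `Q = (0,1) × (0,+∞)`, first coordinate the state `s`, second the time `t`. -/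
def Qset : Set (ℝ × ℝ) := Ioo 0 1 ×ˢ Ioi 0

/-- `∂Q = ([0,1] × {0}) ∪ ({0,1} × [0,+∞))`. -/
def bdQ : Set (ℝ × ℝ) := (Icc 0 1 ×ˢ {0}) ∪ (({0, 1} : Set ℝ) ×ˢ Ici 0)

/-- `∂⁻Q = ([0,1] × {0}) ∪ ({0} × [0,+∞))`. -/
def bdQminus : Set (ℝ × ℝ) := (Icc 0 1 ×ˢ {0}) ∪ (({0} : Set ℝ) ×ˢ Ici 0)

/-- Viscosity subsolution of `U_t + H(s,U') = 0` in `Q`. -/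
def IsViscSubsol (H : ℝ → ℝ → ℝ) (U : ℝ → ℝ → ℝ) : Prop :=
  ∀ Φ : ℝ → ℝ → ℝ, ContDiff ℝ 1 (fun p : ℝ × ℝ => Φ p.1 p.2) →
    ∀ p : ℝ × ℝ, p ∈ Qset →
      IsLocalMaxOn (fun q : ℝ × ℝ => U q.1 q.2 - Φ q.1 q.2) Qset p →
      deriv (fun t => Φ p.1 t) p.2 + H p.1 (deriv (fun s => Φ s p.2) p.1) ≤ 0

/-- Viscosity supersolution of `U_t + H(s,U') = 0` in `Q`. -/
def IsViscSupersol (H : ℝ → ℝ → ℝ) (U : ℝ → ℝ → ℝ) : Prop :=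
  ∀ Φ : ℝ → ℝ → ℝ, ContDiff ℝ 1 (fun p : ℝ × ℝ => Φ p.1 p.2) →
    ∀ p : ℝ × ℝ, p ∈ Qset →
      IsLocalMinOn (fun q : ℝ × ℝ => U q.1 q.2 - Φ q.1 q.2) Qset p →
      0 ≤ deriv (fun t => Φ p.1 t) p.2 + H p.1 (deriv (fun s => Φ s p.2) p.1)

/-- The Lax–Oleinik value function associated to a boundary datum `g` on `∂Q`:
`V(s,t) = inf { g(s₀,t₀) + ∫_{t₀}^t L(η,η̇) dτ }`, the infimum being over points
`(s₀,t₀) ∈ ∂Q` with `t₀ ≤ t` (where `t₀ = t` is only allowed for the trivial curve) and over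
absolutely continuous curves `η : [t₀,t] → [0,1]` with `η(t₀) = s₀`, `η(t) = s`. -/
def valOn (B : Set (ℝ × ℝ)) (H : ℝ → ℝ → ℝ) (g : ℝ → ℝ → ℝ) (s t : ℝ) : ℝ :=
  sInf {v : ℝ | ∃ s₀ t₀ : ℝ, (s₀, t₀) ∈ B ∧ (t₀ < t ∨ (t₀ = t ∧ s₀ = s)) ∧
    ∃ η η' : ℝ → ℝ, IsACDerivOn t₀ t η η' ∧ (∀ τ ∈ Icc t₀ t, η τ ∈ Icc (0:ℝ) 1) ∧
      η t₀ = s₀ ∧ η t = s ∧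
      (v : EReal) = ((g s₀ t₀ : ℝ) : EReal) +
        eIntegral t₀ t fun τ => ((Lagr H (η τ) (η' τ) : ℝ) : EReal)}

/-- Value function for the boundary datum on `∂Q`. -/
def valV (H : ℝ → ℝ → ℝ) (g : ℝ → ℝ → ℝ) : ℝ → ℝ → ℝ := valOn bdQ H g

/-- Value function for the boundary datum on `∂⁻Q`. -/
def valW (H : ℝ → ℝ → ℝ) (g : ℝ → ℝ → ℝ) : ℝ → ℝ → ℝ := valOn bdQminus H g

/-! #### Embedded networks in `ℝ^N` -/

/-- Euclidean space `ℝ^N`. -/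
abbrev EucN (N : ℕ) := EuclideanSpace ℝ (Fin N)

/-- A regular simple arc in `ℝ^N`, parametrized on `[0,1]`: a `C¹` injective curve with
nowhere vanishing (one-sided at the endpoints) derivative. -/
structure Arc (N : ℕ) where
  toFun : ℝ → EucN N
  deriv : ℝ → EucN N
  hasDeriv : ∀ s ∈ Icc (0:ℝ) 1, HasDerivWithinAt toFun (deriv s) (Icc 0 1) s
  contDeriv : ContinuousOn deriv (Icc 0 1)
  deriv_ne_zero : ∀ s ∈ Icc (0:ℝ) 1, deriv s ≠ 0
  injOn : InjOn toFun (Icc 0 1)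

/-- `γ'` is the inverse parametrization of `γ`: `γ'(s) = γ(1-s)` on `[0,1]`. -/
def Arc.IsInverse {N : ℕ} (γ γ' : Arc N) : Prop :=
  ∀ s ∈ Icc (0:ℝ) 1, γ'.toFun s = γ.toFun (1 - s)

/-- An embedded network in `ℝ^N`: a finite, connected collection of arcs, closed under
inverse parametrization, such that two arcs which are not inverse to each other meet only at
endpoints, vertices (endpoints of arcs) never lie in the interior of an arc, and no arc is a
loop (this is subsumed by injectivity of the arcs on `[0,1]`). -/
structure EmbNetwork (N : ℕ) where
  arcs : Set (Arc N)
  finite : arcs.Finite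
  nonempty : arcs.Nonempty
  closed_inv : ∀ γ ∈ arcs, ∃ γ' ∈ arcs, Arc.IsInverse γ γ'
  disj : ∀ γ ∈ arcs, ∀ γ' ∈ arcs, γ ≠ γ' → ¬ Arc.IsInverse γ γ' →
    (γ.toFun '' Ioo 0 1) ∩ (γ'.toFun '' Icc 0 1) = ∅
  no_vertex_inside : ∀ γ ∈ arcs, ∀ γ' ∈ arcs, ∀ s ∈ Ioo (0:ℝ) 1,
    γ.toFun s ≠ γ'.toFun 0 ∧ γ.toFun s ≠ γ'.toFun 1
  connected : IsConnected (⋃ γ ∈ arcs, γ.toFun '' Icc 0 1)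

namespace EmbNetwork

variable {N : ℕ}

/-- The support `Γ ⊆ ℝ^N` of the network. -/
def carrier (Γ : EmbNetwork N) : Set (EucN N) := ⋃ γ ∈ Γ.arcs, γ.toFun '' Icc 0 1

/-- The set `V` of vertices of the network. -/
def V (Γ : EmbNetwork N) : Set (EucN N) :=
  {x | ∃ γ ∈ Γ.arcs, γ.toFun 0 = x ∨ γ.toFun 1 = x}

/-- The geodesic distance on `Γ` induced by the Euclidean metric: the infimum of the
euclidean lengths of absolutely continuous curves joining `x` to `y` within `Γ`. -/
def geoDist (Γ : EmbNetwork N) (x y : EucN N) : ℝ :=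
  sInf {l : ℝ | ∃ ξ ξ' : ℝ → EucN N, IsACDerivOn 0 1 ξ ξ' ∧
    (∀ t ∈ Icc (0:ℝ) 1, ξ t ∈ Γ.carrier) ∧ ξ 0 = x ∧ ξ 1 = y ∧
    l = ∫ τ in Icc (0:ℝ) 1, ‖ξ' τ‖}

end EmbNetwork

/-! #### Hamiltonians, flux limiters and the Lagrangian on a network -/

/-- A Hamiltonian on the network `Γ`: a family of Hamiltonians indexed by the arcs, each
satisfying the standing assumptions, with the compatibility condition
`H_{γ̃}(s,μ) = H_γ(1-s,-μ)` for inverse arcs. -/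
structure IsNetworkHamiltonian {N : ℕ} (Γ : EmbNetwork N) (H : Arc N → ℝ → ℝ → ℝ) : Prop where
  isHam : ∀ γ ∈ Γ.arcs, IsHamiltonian (H γ)
  compat : ∀ γ ∈ Γ.arcs, ∀ γ' ∈ Γ.arcs, Arc.IsInverse γ γ' →
    ∀ s ∈ Icc (0:ℝ) 1, ∀ μ : ℝ, H γ' s μ = H γ (1 - s) (-μ)

/-- A flux limiter: constants `c x` for the vertices with `c x ≤ min_{γ ∈ Γ_x} c_γ`. -/
def IsFluxLimiter {N : ℕ} (Γ : EmbNetwork N) (H : Arc N → ℝ → ℝ → ℝ)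
    (c : EucN N → ℝ) : Prop :=
  ∀ x ∈ Γ.V, ∀ γ ∈ Γ.arcs, γ.toFun 1 = x → c x ≤ cHam (H γ)

/-- The Lagrangian `L : ℝ^N × ℝ^N → ℝ ∪ {+∞}` of the network, associated to the Hamiltonian
`H` and the flux limiter `c`:  `L(x,q) = L_γ(γ⁻¹(x), (q·γ̇)/|γ̇|²)` if `x ∈ γ((0,1))` and `q`
is parallel to `γ̇(γ⁻¹ x)`; at a vertex `x`, `L(x,0) = c x`, and for `q ≠ 0` tangent,
`L(x,q) = min L_γ(1, (q·γ̇(1))/|γ̇(1)|²)`, the minimum over arcs `γ ∈ Γ_x` with `q` parallel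
to `γ̇(1)`; `L(x,q) = +∞` if `(x,q) ∉ TΓ`. -/
def eLag {N : ℕ} (Γ : EmbNetwork N) (H : Arc N → ℝ → ℝ → ℝ) (c : EucN N → ℝ)
    (x q : EucN N) : EReal :=
  if x ∈ Γ.V then
    if q = 0 then ((c x : ℝ) : EReal)
    else if ∃ γ ∈ Γ.arcs, γ.toFun 1 = x ∧ ∃ lam : ℝ, q = lam • γ.deriv 1 then
      ((sInf {v : ℝ | ∃ γ ∈ Γ.arcs, γ.toFun 1 = x ∧ (∃ lam : ℝ, q = lam • γ.deriv 1) ∧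
        v = Lagr (H γ) 1 ((inner ℝ q (γ.deriv 1) : ℝ) / ‖γ.deriv 1‖ ^ 2)} : ℝ) : EReal)
    else ⊤
  else
    if ∃ γ ∈ Γ.arcs, ∃ s ∈ Ioo (0:ℝ) 1, γ.toFun s = x ∧ ∃ lam : ℝ, q = lam • γ.deriv s then
      ((sInf {v : ℝ | ∃ γ ∈ Γ.arcs, ∃ s ∈ Ioo (0:ℝ) 1, γ.toFun s = x ∧
        (∃ lam : ℝ, q = lam • γ.deriv s) ∧
        v = Lagr (H γ) s ((inner ℝ q (γ.deriv s) : ℝ) / ‖γ.deriv s‖ ^ 2)} : ℝ) : EReal)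
    else ⊤

/-- The (extended-real valued) action `∫_a^b L(ξ,ξ̇) dτ` of a curve. -/
def eAction {N : ℕ} (Γ : EmbNetwork N) (H : Arc N → ℝ → ℝ → ℝ) (c : EucN N → ℝ)
    (a b : ℝ) (ξ ξ' : ℝ → EucN N) : EReal :=
  eIntegral a b fun τ => eLag Γ H c (ξ τ) (ξ' τ)

/-- A curve `ξ : [a,b] → Γ` is admissible if there is a finite partition
`a = t₁ < t₂ < ⋯ < t_m = b` whose interior points are mapped to vertices, such that on each
open subinterval either the curve avoids the vertices and has distinct endpoints, or it is
constantly equal to a vertex. -/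
def Admissible {N : ℕ} (Γ : EmbNetwork N) (a b : ℝ) (ξ : ℝ → EucN N) : Prop :=
  ∃ (n : ℕ) (t : ℕ → ℝ), t 0 = a ∧ t n = b ∧ (∀ i, i < n → t i < t (i + 1)) ∧
    (∀ i, 0 < i → i < n → ξ (t i) ∈ Γ.V) ∧
    ∀ i, i < n →
      ((∀ τ ∈ Ioo (t i) (t (i + 1)), ξ τ ∉ Γ.V) ∧ ξ (t i) ≠ ξ (t (i + 1))) ∨
      ∃ x ∈ Γ.V, ∀ τ ∈ Ioo (t i) (t (i + 1)), ξ τ = x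

/-- The minimal action functional `S(x,t,y,r)`: the infimum of the actions
`∫_0^{r-t} L(ξ,ξ̇) dτ` over absolutely continuous curves `ξ : [0,r-t] → ℝ^N` with
`ξ(0) = x`, `ξ(r-t) = y`. -/
def minAction {N : ℕ} (Γ : EmbNetwork N) (H : Arc N → ℝ → ℝ → ℝ) (c : EucN N → ℝ)
    (x : EucN N) (t : ℝ) (y : EucN N) (r : ℝ) : ℝ :=
  sInf {v : ℝ | ∃ ξ ξ' : ℝ → EucN N, IsACDerivOn 0 (r - t) ξ ξ' ∧
    ξ 0 = x ∧ ξ (r - t) = y ∧ (v : EReal) = eAction Γ H c 0 (r - t) ξ ξ'}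

/-- The Lax–Oleinik formula on the network:
`u(x,t) = inf { ∫_0^t L(ξ,ξ̇) dτ + u₀(ξ(0)) }`, the infimum over absolutely continuous
curves `ξ : [0,t] → Γ` with `ξ(t) = x`. -/
def laxOleinik {N : ℕ} (Γ : EmbNetwork N) (H : Arc N → ℝ → ℝ → ℝ) (c : EucN N → ℝ)
    (u₀ : EucN N → ℝ) (x : EucN N) (t : ℝ) : ℝ :=
  sInf {v : ℝ | ∃ ξ ξ' : ℝ → EucN N, IsACDerivOn 0 t ξ ξ' ∧
    (∀ τ ∈ Icc 0 t, ξ τ ∈ Γ.carrier) ∧ ξ t = x ∧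
    (v : EReal) = ((u₀ (ξ 0) : ℝ) : EReal) + eAction Γ H c 0 t ξ ξ'}

/-! #### Sub- and supersolutions of the time-dependent problem on the network -/

/-- Subsolution of (HJΓ): for every arc, `v ∘ γ` is a viscosity subsolution on `Q`, and at
every vertex `x` and `t₀ > 0`, every `C¹` supertangent `ψ` to `v(x,·)` at `t₀` satisfies
`ψ'(t₀) ≤ c x`. -/
def IsNetSubsol {N : ℕ} (Γ : EmbNetwork N) (H : Arc N → ℝ → ℝ → ℝ) (c : EucN N → ℝ)
    (v : EucN N → ℝ → ℝ) : Prop :=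
  (∀ γ ∈ Γ.arcs, IsViscSubsol (H γ) fun s t => v (γ.toFun s) t) ∧
  ∀ x ∈ Γ.V, ∀ t₀ : ℝ, 0 < t₀ → ∀ ψ : ℝ → ℝ, ContDiff ℝ 1 ψ →
    IsLocalMax (fun t => v x t - ψ t) t₀ → deriv ψ t₀ ≤ c x

/-- Supersolution of (HJΓ): for every arc, `v ∘ γ` is a viscosity supersolution on `Q`, and
at every vertex `x` and `t₀ > 0`, if some `C¹` subtangent `φ` to `v(x,·)` at `t₀` has
`φ'(t₀) < c x`, then there is an arc `γ ∈ Γ_x` such that every `C¹` subtangent `Φ` to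
`v ∘ γ` at `(1,t₀)`, constrained to the closure of `Q`, satisfies
`Φ_t(1,t₀) + H_γ(1,Φ'(1,t₀)) ≥ 0`. -/
def IsNetSupersol {N : ℕ} (Γ : EmbNetwork N) (H : Arc N → ℝ → ℝ → ℝ) (c : EucN N → ℝ)
    (v : EucN N → ℝ → ℝ) : Prop :=
  (∀ γ ∈ Γ.arcs, IsViscSupersol (H γ) fun s t => v (γ.toFun s) t) ∧
  ∀ x ∈ Γ.V, ∀ t₀ : ℝ, 0 < t₀ → ∀ φ : ℝ → ℝ, ContDiff ℝ 1 φ →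
    IsLocalMin (fun t => v x t - φ t) t₀ → deriv φ t₀ < c x →
    ∃ γ ∈ Γ.arcs, γ.toFun 1 = x ∧
      ∀ Φ : ℝ → ℝ → ℝ, ContDiff ℝ 1 (fun p : ℝ × ℝ => Φ p.1 p.2) →
        IsLocalMinOn (fun p : ℝ × ℝ => v (γ.toFun p.1) p.2 - Φ p.1 p.2)
          (Icc 0 1 ×ˢ Ici 0) (1, t₀) →
        0 ≤ deriv (fun t => Φ 1 t) t₀ + H γ 1 (deriv (fun s => Φ s t₀) 1)

end
section Aux

lemma my_exists_subgradient (f : ℝ → ℝ) (hf : ConvexOn ℝ Set.univ f) (μ : ℝ) :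
    ∃ lam : ℝ, ∀ ν : ℝ, f μ + lam * (ν - μ) ≤ f ν := by
  set S : Set ℝ := (fun ν => (f ν - f μ) / (ν - μ)) '' Set.Ioi μ with hS
  have hne : S.Nonempty := ⟨_, ⟨μ + 1, by simp, rfl⟩⟩
  have hlb : ∀ ν, ν < μ → (f μ - f ν) / (μ - ν) ∈ lowerBounds S := by
    rintro ν hν _ ⟨ν', hν', rfl⟩
    exact hf.slope_mono_adjacent (Set.mem_univ ν) (Set.mem_univ ν') hν hν'
  have hbdd : BddBelow S := ⟨_, hlb (μ - 1) (by linarith)⟩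
  refine ⟨sInf S, fun ν => ?_⟩
  rcases lt_trichotomy ν μ with hν | hν | hν
  · have h1 : (f μ - f ν) / (μ - ν) ≤ sInf S := le_csInf hne (fun b hb => hlb ν hν hb)
    have h2 : f μ - f ν ≤ sInf S * (μ - ν) := by
      rwa [div_le_iff₀ (by linarith)] at h1
    have h3 : sInf S * (ν - μ) = -(sInf S * (μ - ν)) := by ring
    linarith
  · simp [hν]
  · have h1 : sInf S ≤ (f ν - f μ) / (ν - μ) := csInf_le hbdd ⟨ν, hν, rfl⟩
    have h2 : sInf S * (ν - μ) ≤ f ν - f μ := by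
      rwa [le_div_iff₀ (by linarith)] at h1
    linarith

lemma my_key_bound (H : ℝ → ℝ → ℝ) (hH : IsHamiltonian H) (s₀ μ lam : ℝ)
    (hs₀ : s₀ ∈ Set.Icc (0:ℝ) 1)
    (hlam : ∀ ν : ℝ, H s₀ μ + lam * (ν - μ) ≤ H s₀ ν) {ε : ℝ} (hε : 0 < ε) :
    ∃ δ₂ > (0:ℝ), ∀ s ∈ Set.Icc (0:ℝ) 1, |s - s₀| < δ₂ →
      ∀ ν : ℝ, lam * ν - H s ν ≤ lam * μ - H s₀ μ + ε := by
  obtain ⟨R, hR⟩ := hH.superlinear (|lam| + 1)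
  set B₀ := lam * μ - H s₀ μ with hB₀
  set R₁ := max R (|B₀| + 1) with hR₁
  have hK : IsCompact (Set.Icc (0:ℝ) 1 ×ˢ Set.Icc (-R₁) R₁) := isCompact_Icc.prod isCompact_Icc
  have hcont : ContinuousOn (fun p : ℝ × ℝ => H p.1 p.2)
      (Set.Icc (0:ℝ) 1 ×ˢ Set.Icc (-R₁) R₁) :=
    hH.cont.mono (fun p hp => ⟨hp.1, Set.mem_univ _⟩)
  have huc := hK.uniformContinuousOn_of_continuous hcont
  rw [Metric.uniformContinuousOn_iff] at huc
  obtain ⟨δ₂, hδ₂pos, hδ₂⟩ := huc ε hε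
  refine ⟨δ₂, hδ₂pos, fun s hs hss ν => ?_⟩
  rcases le_or_gt (|ν|) R₁ with hν | hν
  · have hνm : ν ∈ Set.Icc (-R₁) R₁ := by
      rcases abs_le.mp hν with ⟨h1, h2⟩; exact ⟨h1, h2⟩
    have h1 : lam * ν - H s₀ ν ≤ B₀ := by
      have := hlam ν
      have hring : lam * (ν - μ) = lam * ν - lam * μ := by ring
      rw [hB₀]; linarith
    have h2 : |H s₀ ν - H s ν| < ε := by
      have hd := hδ₂ (s₀, ν) ⟨hs₀, hνm⟩ (s, ν) ⟨hs, hνm⟩ (by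
        rw [Prod.dist_eq]
        simp only [dist_self]
        rw [Real.dist_eq, abs_sub_comm]
        exact max_lt hss hδ₂pos)
      rwa [Real.dist_eq] at hd
    have h2' := (abs_lt.mp h2).2
    linarith
  · have hRν : R ≤ |ν| := le_trans (le_max_left _ _) hν.le
    have h3 := hR s hs ν hRν
    have h4 : lam * ν ≤ |lam| * |ν| := le_trans (le_abs_self _) (abs_mul lam ν).le
    have h5 : (|lam| + 1) * |ν| = |lam| * |ν| + |ν| := by ring
    have h6 : |B₀| + 1 ≤ R₁ := le_max_right _ _
    have h7 : -|B₀| ≤ B₀ := neg_abs_le _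
    linarith

lemma my_cutoff (a : ℝ) (ha : 0 < a) :
    ∃ ψ χ : ℝ → ℝ, (∀ x, HasDerivAt ψ (χ x) x) ∧ Continuous χ ∧
      (∀ x, |ψ x| ≤ 2 * a) ∧ (∀ x, |x| ≤ a → ψ x = x ∧ χ x = 1) := by
  set χ : ℝ → ℝ := fun u => max 0 (min 1 (2 - |u| / a)) with hχdef
  have hχc : Continuous χ :=
    continuous_const.max (continuous_const.min (continuous_const.sub (continuous_abs.div_const a)))
  have hχ01 : ∀ u, 0 ≤ χ u ∧ χ u ≤ 1 :=
    fun u => ⟨le_max_left _ _, max_le zero_le_one (min_le_left _ _)⟩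
  have hχ1 : ∀ u, |u| ≤ a → χ u = 1 := by
    intro u hu
    have h1 : |u| / a ≤ 1 := (div_le_one ha).mpr hu
    have h2 : (1:ℝ) ≤ 2 - |u| / a := by linarith
    rw [hχdef]
    simp only [min_eq_left h2]
    exact max_eq_right zero_le_one
  have hχ0 : ∀ u, 2 * a ≤ |u| → χ u = 0 := by
    intro u hu
    have h2 : 2 - |u| / a ≤ 0 := by
      rw [sub_nonpos, le_div_iff₀ ha]; linarith
    have h3 : min 1 (2 - |u| / a) ≤ 0 := le_trans (min_le_right _ _) h2
    rw [hχdef]; exact max_eq_left h3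
  set ψ : ℝ → ℝ := fun x => ∫ u in (0:ℝ)..x, χ u with hψdef
  have hd : ∀ x, HasDerivAt ψ (χ x) x := fun x => (hχc.integral_hasStrictDerivAt 0 x).hasDerivAt
  have hψdiff : Differentiable ℝ ψ := fun x => (hd x).differentiableAt
  have hmono : Monotone ψ :=
    monotone_of_deriv_nonneg hψdiff (fun x => by rw [(hd x).deriv]; exact (hχ01 x).1)
  have hψx : ∀ x, |x| ≤ a → ψ x = x := by
    intro x hx
    have hEq : Set.EqOn χ (fun _ => (1:ℝ)) (Set.uIcc 0 x) := by
      intro u hu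
      apply hχ1
      rcases Set.mem_uIcc.mp hu with ⟨h1, h2⟩ | ⟨h1, h2⟩ <;>
        · rw [abs_le]; rcases abs_le.mp hx with ⟨hx1, hx2⟩; constructor <;> linarith
    calc ψ x = ∫ u in (0:ℝ)..x, (1:ℝ) := intervalIntegral.integral_congr hEq
      _ = x := by simp
  have hup2a : ψ (2 * a) ≤ 2 * a := by
    have h1 : ψ (2 * a) ≤ ∫ u in (0:ℝ)..(2 * a), (1:ℝ) :=
      intervalIntegral.integral_mono_on (by positivity) (hχc.intervalIntegrable _ _)
        intervalIntegrable_const (fun u _ => (hχ01 u).2)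
    simpa using h1
  have hlo2a : -(2 * a) ≤ ψ (-(2 * a)) := by
    have h1 : (∫ u in (-(2 * a))..(0:ℝ), χ u) ≤ ∫ u in (-(2 * a))..(0:ℝ), (1:ℝ) :=
      intervalIntegral.integral_mono_on (by linarith) (hχc.intervalIntegrable _ _)
        intervalIntegrable_const (fun u _ => (hχ01 u).2)
    have h2 : ψ (-(2 * a)) = -∫ u in (-(2 * a))..(0:ℝ), χ u := by
      rw [hψdef]; exact intervalIntegral.integral_symm _ _
    rw [h2]
    have h3 : (∫ u in (-(2 * a))..(0:ℝ), (1:ℝ)) = 2 * a := by simp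
    linarith
  have hantiR : AntitoneOn ψ (Set.Ici (2 * a)) := by
    apply antitoneOn_of_deriv_nonpos (convex_Ici _) hψdiff.continuous.continuousOn
      hψdiff.differentiableOn
    intro u hu
    rw [interior_Ici] at hu
    have hu' : 2 * a < u := hu
    have hz : χ u = 0 := hχ0 u (by rw [abs_of_pos (by linarith)]; linarith)
    rw [(hd u).deriv, hz]
  have hantiL : AntitoneOn ψ (Set.Iic (-(2 * a))) := by
    apply antitoneOn_of_deriv_nonpos (convex_Iic _) hψdiff.continuous.continuousOn
      hψdiff.differentiableOn
    intro u hu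
    rw [interior_Iic] at hu
    have hu' : u < -(2 * a) := hu
    have hz : χ u = 0 := hχ0 u (by rw [abs_of_neg (by linarith : u < 0)]; linarith)
    rw [(hd u).deriv, hz]
  refine ⟨ψ, χ, hd, hχc, fun x => ?_, fun x hx => ⟨hψx x hx, hχ1 x hx⟩⟩
  rw [abs_le]
  constructor
  · rcases le_total x (-(2 * a)) with hx | hx
    · exact le_trans hlo2a (hantiL hx Set.self_mem_Iic hx)
    · exact le_trans hlo2a (hmono hx)
  · rcases le_total x (2 * a) with hx | hx
    · exact le_trans (hmono hx) hup2a
    · exact le_trans (hantiR Set.self_mem_Ici hx hx) hup2a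

end Aux

/-- Let `U` be continuous on the closure of `Q` and suppose that for every
`(s,t) ∈ Q` and every `C¹` curve `η` with values in `[0,1]` and `η(t) = s`, one has
`U(s,t) - U(η(t-δ), t-δ) ≤ ∫_{t-δ}^t L(η,η̇) dτ` for all sufficiently small `δ > 0`. Then
`U` is a viscosity subsolution of `U_t + H(s,U') = 0` in `Q`. -/
theorem stmt18 (H : ℝ → ℝ → ℝ) (hH : IsHamiltonian H) (U : ℝ → ℝ → ℝ)
    (hU : ContinuousOn (fun p : ℝ × ℝ => U p.1 p.2) (Icc 0 1 ×ˢ Ici 0))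
    (h : ∀ s t : ℝ, (s, t) ∈ Qset → ∀ η : ℝ → ℝ, ContDiff ℝ 1 η →
      (∀ τ : ℝ, η τ ∈ Icc (0:ℝ) 1) → η t = s →
      ∃ δ₀ > (0:ℝ), ∀ δ : ℝ, 0 < δ → δ < δ₀ →
        U s t - U (η (t - δ)) (t - δ) ≤ ∫ τ in (t - δ)..t, Lagr H (η τ) (deriv η τ)) :
    IsViscSubsol H U := by
  intro Φ hΦ p hp hmax
  obtain ⟨s₀, t₀⟩ := p
  have hp' : (s₀, t₀) ∈ Set.Ioo (0:ℝ) 1 ×ˢ Set.Ioi (0:ℝ) := hp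
  have hs₀ : s₀ ∈ Set.Ioo (0:ℝ) 1 := hp'.1
  have ht₀ : (0:ℝ) < t₀ := hp'.2
  set F : ℝ × ℝ → ℝ := fun q => Φ q.1 q.2 with hFdef
  have hFd : HasFDerivAt F (fderiv ℝ F (s₀, t₀)) (s₀, t₀) :=
    (hΦ.differentiable one_ne_zero (s₀, t₀)).hasFDerivAt
  set DF := fderiv ℝ F (s₀, t₀) with hDFdef
  have hμd : HasDerivAt (fun s => Φ s t₀) (DF (1, 0)) s₀ := by
    have h1 : HasDerivAt (fun s : ℝ => ((s, t₀) : ℝ × ℝ)) ((1:ℝ), (0:ℝ)) s₀ :=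
      (hasDerivAt_id s₀).prodMk (hasDerivAt_const _ _)
    exact hFd.comp_hasDerivAt s₀ h1
  have hDtd : HasDerivAt (fun t => Φ s₀ t) (DF (0, 1)) t₀ := by
    have h1 : HasDerivAt (fun t : ℝ => ((s₀, t) : ℝ × ℝ)) ((0:ℝ), (1:ℝ)) t₀ :=
      (hasDerivAt_const _ _).prodMk (hasDerivAt_id t₀)
    exact hFd.comp_hasDerivAt t₀ h1
  show deriv (fun t => Φ s₀ t) t₀ + H s₀ (deriv (fun s => Φ s t₀) s₀) ≤ 0
  rw [hμd.deriv, hDtd.deriv]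
  set μ := DF (1, 0) with hμdef
  set Dt := DF (0, 1) with hDtdef
  obtain ⟨lam, hlam⟩ := my_exists_subgradient (fun ν => H s₀ ν)
    (hH.convex s₀ ⟨hs₀.1.le, hs₀.2.le⟩) μ
  have key : ∀ ε : ℝ, 0 < ε → Dt + H s₀ μ ≤ 2 * ε := by
    intro ε hε
    obtain ⟨δ₂, hδ₂, hbound⟩ := my_key_bound H hH s₀ μ lam ⟨hs₀.1.le, hs₀.2.le⟩ hlam hε
    set r := min s₀ (1 - s₀) with hrdef
    have hr : 0 < r := lt_min hs₀.1 (by linarith [hs₀.2])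
    set m := min r δ₂ with hmdef
    have hmpos : 0 < m := lt_min hr hδ₂
    set a := m / (2 * (|lam| + 1)) with hadef
    have ha : 0 < a := div_pos hmpos (by positivity)
    obtain ⟨ψ, χ, hd, hχc, hψb, hloc⟩ := my_cutoff a ha
    set η : ℝ → ℝ := fun τ => s₀ + lam * ψ (τ - t₀) with hηdef
    have hηd : ∀ τ, HasDerivAt η (lam * χ (τ - t₀)) τ := by
      intro τ
      have h1 : HasDerivAt (fun τ : ℝ => ψ (τ - t₀)) (χ (τ - t₀)) τ := by
        have h2 := (hd (τ - t₀)).comp τ ((hasDerivAt_id τ).sub_const t₀)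
        rw [mul_one] at h2
        exact h2
      exact (h1.const_mul lam).const_add s₀
    have hηsmall : ∀ τ, |η τ - s₀| < m := by
      intro τ
      have h1 : |η τ - s₀| = |lam| * |ψ (τ - t₀)| := by
        rw [hηdef]; simp [abs_mul]
      have h2 : |lam| * |ψ (τ - t₀)| ≤ |lam| * (2 * a) :=
        mul_le_mul_of_nonneg_left (hψb _) (abs_nonneg _)
      have hae : a * (2 * (|lam| + 1)) = m := div_mul_cancel₀ m (by positivity)
      have h3 : |lam| * (2 * a) < m := by nlinarith [ha, abs_nonneg lam]
      rw [h1]; linarith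
    have hηm : ∀ τ, η τ ∈ Set.Ioo (0:ℝ) 1 := by
      intro τ
      have h1 : |η τ - s₀| < r := lt_of_lt_of_le (hηsmall τ) (min_le_left _ _)
      rcases abs_lt.mp h1 with ⟨h2, h3⟩
      have h4 : r ≤ s₀ := min_le_left _ _
      have h5 : r ≤ 1 - s₀ := min_le_right _ _
      exact ⟨by linarith, by linarith⟩
    have hηmem : ∀ τ, η τ ∈ Set.Icc (0:ℝ) 1 := fun τ => ⟨(hηm τ).1.le, (hηm τ).2.le⟩
    have hηδ₂ : ∀ τ, |η τ - s₀| < δ₂ := fun τ => lt_of_lt_of_le (hηsmall τ) (min_le_right _ _)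
    have hb1 : ∀ (τ ν : ℝ), lam * ν - H (η τ) ν ≤ lam * μ - H s₀ μ + ε :=
      fun τ ν => hbound (η τ) (hηmem τ) (hηδ₂ τ) ν
    set B := lam * μ - H s₀ μ + ε with hBdef
    have hηC1 : ContDiff ℝ 1 η := by
      rw [contDiff_one_iff_deriv]
      refine ⟨fun τ => (hηd τ).differentiableAt, ?_⟩
      have h1 : deriv η = fun τ => lam * χ (τ - t₀) := funext fun τ => (hηd τ).deriv
      rw [h1]
      exact continuous_const.mul (hχc.comp (continuous_id.sub continuous_const))
    have hψ0 : ψ 0 = 0 := by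
      have := (hloc 0 (by simpa using ha.le)).1; simpa using this
    have hχz : χ 0 = 1 := (hloc 0 (by simpa using ha.le)).2
    have hηt₀ : η t₀ = s₀ := by rw [hηdef]; simp [hψ0]
    obtain ⟨δ₀, hδ₀, hUineq⟩ := h s₀ t₀ hp η hηC1 hηmem hηt₀
    have hηderiv : ∀ τ, |τ - t₀| ≤ a → deriv η τ = lam := by
      intro τ hτ
      rw [(hηd τ).deriv, (hloc _ hτ).2, mul_one]
    have hLag_le : ∀ τ, Lagr H (η τ) lam ≤ B := by
      intro τ
      exact csSup_le (Set.range_nonempty _) (by rintro _ ⟨ν, rfl⟩; exact hb1 τ ν)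
    have hcontη : Continuous η := hηC1.continuous
    have hcontHν : ∀ τ, Continuous (fun ν => H (η τ) ν) := by
      intro τ
      exact hH.cont.comp_continuous (continuous_const.prodMk continuous_id)
        (fun ν => ⟨hηmem τ, Set.mem_univ _⟩)
    have hcontHq : ∀ c : ℝ, Continuous (fun τ => H (η τ) c) := by
      intro c
      exact hH.cont.comp_continuous (hcontη.prodMk continuous_const)
        (fun τ => ⟨hηmem τ, Set.mem_univ _⟩)
    set g : ℝ → ℝ := fun τ => ⨆ q : ℚ, (lam * (q:ℝ) - H (η τ) (q:ℝ)) with hgdef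
    have hbddQ : ∀ τ, BddAbove (Set.range fun q : ℚ => lam * (q:ℝ) - H (η τ) (q:ℝ)) :=
      fun τ => ⟨B, by rintro _ ⟨q, rfl⟩; exact hb1 τ (q:ℝ)⟩
    have hgmeas : Measurable g := by
      apply Measurable.iSup
      intro q
      exact (continuous_const.sub (hcontHq (q:ℝ))).measurable
    have hgle : ∀ τ, g τ ≤ B := fun τ => ciSup_le (fun q => hb1 τ (q:ℝ))
    have hgge : ∀ τ, -(H (η τ) 0) ≤ g τ := by
      intro τ
      have h1 := le_ciSup (hbddQ τ) (0:ℚ)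
      simpa using h1
    have hQsup : ∀ τ, Lagr H (η τ) lam = g τ := by
      intro τ
      apply le_antisymm
      · apply csSup_le (Set.range_nonempty _)
        rintro _ ⟨ν, rfl⟩
        by_contra hcon
        push_neg at hcon
        have hopen : IsOpen {x : ℝ | g τ < lam * x - H (η τ) x} :=
          isOpen_lt continuous_const ((continuous_const.mul continuous_id).sub (hcontHν τ))
        obtain ⟨q, hq⟩ := Rat.denseRange_cast.exists_mem_open hopen ⟨ν, hcon⟩
        exact absurd (le_ciSup (hbddQ τ) q) (not_le.mpr hq)
      · apply ciSup_le
        intro q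
        have hba : BddAbove (Set.range fun ν : ℝ => lam * ν - H (η τ) ν) :=
          ⟨B, by rintro _ ⟨ν, rfl⟩; exact hb1 τ ν⟩
        exact le_csSup hba ⟨(q:ℝ), rfl⟩
    have hgInt : IntegrableOn g (Set.Icc (t₀ - a) t₀) := by
      have hGc : Continuous fun τ => |B| + |H (η τ) 0| := continuous_const.add (hcontHq 0).abs
      apply Integrable.mono' (hGc.integrableOn_Icc) hgmeas.aestronglyMeasurable
      filter_upwards with τ
      rw [Real.norm_eq_abs, abs_le]
      constructor
      · linarith [hgge τ, le_abs_self (H (η τ) 0), abs_nonneg B]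
      · linarith [hgle τ, le_abs_self B, abs_nonneg (H (η τ) 0)]
    set ζ : ℝ → ℝ := fun δ => Φ (η (t₀ - δ)) (t₀ - δ) with hζdef
    have h1' : HasDerivAt (fun δ : ℝ => t₀ - δ) (-1) 0 := by
      exact (hasDerivAt_id' (x := (0:ℝ))).const_sub t₀
    have h2' : HasDerivAt (fun δ : ℝ => η (t₀ - δ)) (-lam) 0 := by
      have h3 := (hηd (t₀ - 0)).comp 0 h1'
      have h4 : lam * χ (t₀ - 0 - t₀) * -1 = -lam := by
        rw [show t₀ - 0 - t₀ = (0:ℝ) by ring, hχz]; ring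
      rw [h4] at h3
      exact h3
    have hcd : HasDerivAt (fun δ : ℝ => ((η (t₀ - δ), t₀ - δ) : ℝ × ℝ)) ((-lam, -1) : ℝ × ℝ) 0 :=
      h2'.prodMk h1'
    have hc0 : ((η (t₀ - (0:ℝ)), t₀ - (0:ℝ)) : ℝ × ℝ) = (s₀, t₀) := by simp [hηt₀]
    have hFd2 : HasFDerivAt F DF ((η (t₀ - (0:ℝ)), t₀ - (0:ℝ)) : ℝ × ℝ) := by
      rw [hc0]; exact hFd
    have hζd : HasDerivAt ζ (-(lam * μ) - Dt) 0 := by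
      have h5 := hFd2.comp_hasDerivAt 0 hcd
      have h6 : DF ((-lam, -1) : ℝ × ℝ) = -(lam * μ) - Dt := by
        have h7 : ((-lam, -1) : ℝ × ℝ) = (-lam) • ((1:ℝ), (0:ℝ)) + (-1 : ℝ) • ((0:ℝ), (1:ℝ)) := by
          simp [Prod.ext_iff]
        rw [h7, map_add, DF.map_smul, DF.map_smul]
        simp only [smul_eq_mul, ← hμdef, ← hDtdef]
        ring
      rw [h6] at h5
      exact h5
    have hζ0 : ζ 0 = Φ s₀ t₀ := by rw [hζdef]; simp [hηt₀]
    have hslope : Tendsto (fun δ => (Φ s₀ t₀ - ζ δ) / δ) (𝓝[>] (0:ℝ))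
        (𝓝 (lam * μ + Dt)) := by
      have h8 : Tendsto (slope ζ 0) (𝓝[≠] (0:ℝ)) (𝓝 (-(lam * μ) - Dt)) :=
        hasDerivAt_iff_tendsto_slope.mp hζd
      have h10 := (h8.mono_left (nhdsWithin_mono _ (fun x hx => ne_of_gt hx))).neg
      rw [show -(-(lam * μ) - Dt) = lam * μ + Dt by ring] at h10
      apply h10.congr
      intro δ
      rw [slope_def_field, hζ0, sub_zero]
      ring
    have hev : ∀ᶠ q in 𝓝[Qset] ((s₀, t₀) : ℝ × ℝ),
        U q.1 q.2 - Φ q.1 q.2 ≤ U s₀ t₀ - Φ s₀ t₀ := hmax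
    have hcurvecont : Continuous (fun δ : ℝ => ((η (t₀ - δ), t₀ - δ) : ℝ × ℝ)) :=
      (hcontη.comp (continuous_const.sub continuous_id)).prodMk
        (continuous_const.sub continuous_id)
    have hcurve : Tendsto (fun δ : ℝ => ((η (t₀ - δ), t₀ - δ) : ℝ × ℝ)) (𝓝[>] (0:ℝ))
        (𝓝[Qset] (s₀, t₀)) := by
      apply tendsto_nhdsWithin_of_tendsto_nhds_of_eventually_within
      · exact (hcurvecont.tendsto' 0 (s₀, t₀) (by simp [hηt₀])).mono_left nhdsWithin_le_nhds
      · filter_upwards [Ioo_mem_nhdsGT_of_mem (Set.mem_Ico.mpr ⟨le_refl (0:ℝ), ht₀⟩)] with δ hδ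
        exact ⟨hηm (t₀ - δ), by simp only [Set.mem_Ioi]; linarith [hδ.2]⟩
    have hev2 : ∀ᶠ δ in 𝓝[>] (0:ℝ),
        U (η (t₀ - δ)) (t₀ - δ) - Φ (η (t₀ - δ)) (t₀ - δ) ≤ U s₀ t₀ - Φ s₀ t₀ :=
      hcurve.eventually hev
    have hev1 : ∀ᶠ δ in 𝓝[>] (0:ℝ), lam * μ + Dt - ε < (Φ s₀ t₀ - ζ δ) / δ :=
      hslope.eventually (eventually_gt_nhds (by linarith))
    have hmin : 0 < min δ₀ (min a t₀) := lt_min hδ₀ (lt_min ha ht₀)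
    have hev3 : ∀ᶠ δ in 𝓝[>] (0:ℝ), δ ∈ Set.Ioo (0:ℝ) (min δ₀ (min a t₀)) :=
      Ioo_mem_nhdsGT_of_mem (Set.mem_Ico.mpr ⟨le_refl (0:ℝ), hmin⟩)
    obtain ⟨δ, hδ1, hδ2, hδ3⟩ := (hev1.and (hev2.and hev3)).exists
    have hδpos : 0 < δ := hδ3.1
    have hδδ₀ : δ < δ₀ := lt_of_lt_of_le hδ3.2 (min_le_left _ _)
    have hδa : δ ≤ a :=
      le_of_lt (lt_of_lt_of_le hδ3.2 (le_trans (min_le_right _ _) (min_le_left _ _)))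
    have hδt : δ < t₀ := lt_of_lt_of_le hδ3.2 (le_trans (min_le_right _ _) (min_le_right _ _))
    have hUineq' := hUineq δ hδpos hδδ₀
    set f : ℝ → ℝ := fun τ => Lagr H (η τ) (deriv η τ) with hfdef
    have hEqfg : Set.EqOn f g (Set.Icc (t₀ - δ) t₀) := by
      intro τ hτ
      have hτa : |τ - t₀| ≤ a := by
        rw [abs_le]; exact ⟨by linarith [hτ.1], by linarith [hτ.2, ha]⟩
      show Lagr H (η τ) (deriv η τ) = g τ
      rw [hηderiv τ hτa]
      exact hQsup τ
    have hfInt : IntervalIntegrable f volume (t₀ - δ) t₀ := by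
      rw [intervalIntegrable_iff_integrableOn_Icc_of_le (by linarith)]
      exact (hgInt.mono_set (Set.Icc_subset_Icc (by linarith) le_rfl)).congr_fun
        hEqfg.symm measurableSet_Icc
    have hfle : ∀ τ ∈ Set.Icc (t₀ - δ) t₀, f τ ≤ B := by
      intro τ hτ
      have hτa : |τ - t₀| ≤ a := by
        rw [abs_le]; exact ⟨by linarith [hτ.1], by linarith [hτ.2, ha]⟩
      show Lagr H (η τ) (deriv η τ) ≤ B
      rw [hηderiv τ hτa]
      exact hLag_le τ
    have hIb : (∫ τ in (t₀ - δ)..t₀, f τ) ≤ δ * B := by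
      have h11 := intervalIntegral.integral_mono_on (by linarith : t₀ - δ ≤ t₀) hfInt
        intervalIntegrable_const hfle
      have h12 : (∫ _ in (t₀ - δ)..t₀, B) = δ * B := by
        rw [intervalIntegral.integral_const, show t₀ - (t₀ - δ) = δ by ring, smul_eq_mul]
      linarith
    have hchain1 : (lam * μ + Dt - ε) * δ < Φ s₀ t₀ - ζ δ := by
      rwa [lt_div_iff₀ hδpos] at hδ1
    have hζδ : ζ δ = Φ (η (t₀ - δ)) (t₀ - δ) := rfl
    have hchain2 : Φ s₀ t₀ - ζ δ ≤ U s₀ t₀ - U (η (t₀ - δ)) (t₀ - δ) := by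
      rw [hζδ]; linarith [hδ2]
    have hchain3 : U s₀ t₀ - U (η (t₀ - δ)) (t₀ - δ) ≤ δ * B := le_trans hUineq' hIb
    have h13 : (lam * μ + Dt - ε) * δ ≤ B * δ := by
      rw [mul_comm B δ]; linarith
    have hfin : lam * μ + Dt - ε ≤ B := le_of_mul_le_mul_right h13 hδpos
    rw [hBdef] at hfin
    linarith
  by_contra hcon
  push_neg at hcon
  have := key ((Dt + H s₀ μ) / 4) (by linarith)
  linarith
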